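/- Let G be a countable group equipped with a left-invariant linear order ≤ (that is, a ≤ b implies c*a ≤ c*b for all a, b, c ∈ G). Then there exist a map i : G → ℝ with i(1) = 0 that is strictly order-preserving (g < h implies i(g) < i(h), so in particular i is injective), and a group homomorphism ρ from G to the group of order-automorphisms of ℝ (strictly increasing bijections ℝ → ℝ under composition) such that ρ(g)(i(h)) = i(g*h) for all g, h ∈ G. In particular the orbit map g ↦ ρ(g)(0) equals i and is injective, so ρ is a faithful action. -/

import Mathlib

open Function

/-! Auxiliary: extend an order automorphism of `ℚ` to `ℝ` by suprema. -/

noncomputable def liftFun (e : ℚ ≃o ℚ) (x : ℝ) : ℝ :=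
  sSup ((fun q : ℚ => (e q : ℝ)) '' {q : ℚ | (q : ℝ) < x})

lemma liftFun_set_nonempty (e : ℚ ≃o ℚ) (x : ℝ) :
    ((fun q : ℚ => (e q : ℝ)) '' {q : ℚ | (q : ℝ) < x}).Nonempty := by
  obtain ⟨q, hq⟩ := exists_rat_lt x
  exact ⟨_, ⟨q, hq, rfl⟩⟩

lemma liftFun_bddAbove (e : ℚ ≃o ℚ) (x : ℝ) :
    BddAbove ((fun q : ℚ => (e q : ℝ)) '' {q : ℚ | (q : ℝ) < x}) := by
  obtain ⟨q₁, hq₁⟩ := exists_rat_gt x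
  refine ⟨(e q₁ : ℝ), ?_⟩
  rintro _ ⟨q, hq, rfl⟩
  have hqq : q < q₁ := by exact_mod_cast hq.trans hq₁
  show (e q : ℝ) ≤ (e q₁ : ℝ)
  exact_mod_cast e.le_iff_le.mpr hqq.le

lemma le_liftFun (e : ℚ ≃o ℚ) {q : ℚ} {x : ℝ} (h : (q : ℝ) < x) :
    (e q : ℝ) ≤ liftFun e x :=
  le_csSup (liftFun_bddAbove e x) ⟨q, h, rfl⟩

lemma liftFun_le (e : ℚ ≃o ℚ) {x : ℝ} {y : ℝ}
    (h : ∀ q : ℚ, (q : ℝ) < x → (e q : ℝ) ≤ y) : liftFun e x ≤ y := by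
  apply csSup_le (liftFun_set_nonempty e x)
  rintro _ ⟨q, hq, rfl⟩
  exact h q hq

lemma liftFun_rat (e : ℚ ≃o ℚ) (q₀ : ℚ) : liftFun e (q₀ : ℝ) = e q₀ := by
  apply le_antisymm
  · refine liftFun_le e fun q hq => ?_
    have hq' : q ≤ q₀ := by exact_mod_cast hq.le
    exact_mod_cast e.le_iff_le.mpr hq'
  · refine le_of_forall_lt fun c hc => ?_
    obtain ⟨r, hcr, hr⟩ := exists_rat_btwn hc
    have hr' : r < e q₀ := by exact_mod_cast hr
    have hlt : e.symm r < q₀ := by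
      rw [← e.lt_iff_lt, e.apply_symm_apply]; exact hr'
    have : ((e (e.symm r) : ℚ) : ℝ) ≤ liftFun e (q₀ : ℝ) :=
      le_liftFun e (by exact_mod_cast hlt)
    rw [e.apply_symm_apply] at this
    exact hcr.trans_le this

lemma liftFun_strictMono (e : ℚ ≃o ℚ) : StrictMono (liftFun e) := by
  intro x y hxy
  obtain ⟨q₁, h1, h2⟩ := exists_rat_btwn hxy
  obtain ⟨q₂, h3, h4⟩ := exists_rat_btwn h2
  have hq12 : q₁ < q₂ := by exact_mod_cast h3
  have hle : liftFun e x ≤ (e q₁ : ℝ) := by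
    refine liftFun_le e fun q hq => ?_
    have : q ≤ q₁ := by exact_mod_cast (hq.trans h1).le
    exact_mod_cast e.le_iff_le.mpr this
  have h5 : (e q₁ : ℝ) < (e q₂ : ℝ) := by exact_mod_cast e.lt_iff_lt.mpr hq12
  exact hle.trans_lt (h5.trans_le (le_liftFun e h4))

lemma liftFun_comp (e f : ℚ ≃o ℚ) (x : ℝ) :
    liftFun e (liftFun f x) = liftFun (f.trans e) x := by
  apply le_antisymm
  · refine liftFun_le e fun r hr => ?_
    obtain ⟨_, ⟨q, hq, rfl⟩, hrq⟩ :=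
      exists_lt_of_lt_csSup (liftFun_set_nonempty f x) hr
    have hrq2 : (r : ℝ) < ((f q : ℚ) : ℝ) := hrq
    have hrfq : r < f q := by exact_mod_cast hrq2
    have : e r ≤ e (f q) := e.le_iff_le.mpr hrfq.le
    calc (e r : ℝ) ≤ (e (f q) : ℝ) := by exact_mod_cast this
      _ ≤ liftFun (f.trans e) x := le_liftFun (f.trans e) hq
  · refine liftFun_le (f.trans e) fun q hq => ?_
    obtain ⟨q', hq', hq'x⟩ := exists_rat_btwn hq
    have h1 : f q < f q' := f.lt_iff_lt.mpr (by exact_mod_cast hq')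
    have h2 : ((f q : ℚ) : ℝ) < liftFun f x :=
      lt_of_lt_of_le (by exact_mod_cast h1) (le_liftFun f hq'x)
    exact le_liftFun e h2

lemma liftFun_refl (x : ℝ) : liftFun (OrderIso.refl ℚ) x = x := by
  apply le_antisymm
  · exact liftFun_le _ fun q hq => hq.le
  · refine le_of_forall_lt fun c hc => ?_
    obtain ⟨r, hcr, hr⟩ := exists_rat_btwn hc
    exact hcr.trans_le (le_liftFun (OrderIso.refl ℚ) hr)

noncomputable def liftIso (e : ℚ ≃o ℚ) : ℝ ≃o ℝ :=
  StrictMono.orderIsoOfSurjective _ (liftFun_strictMono e)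
    (fun y => ⟨liftFun e.symm y, by
      rw [liftFun_comp]
      rw [show e.symm.trans e = OrderIso.refl ℚ from
        OrderIso.ext (funext fun q => e.apply_symm_apply q)]
      exact liftFun_refl y⟩)

@[simp] lemma liftIso_apply (e : ℚ ≃o ℚ) (x : ℝ) : liftIso e x = liftFun e x := rfl

noncomputable def liftHom : (ℚ ≃o ℚ) →* (ℝ ≃o ℝ) where
  toFun := liftIso
  map_one' := by
    apply OrderIso.ext
    funext x
    exact liftFun_refl x
  map_mul' e f := by
    apply OrderIso.ext
    funext x
    show liftFun (f.trans e) x = liftFun e (liftFun f x)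
    rw [liftFun_comp]

/-- Let `G` be a countable group with a left-invariant linear order.
Then there exist a strictly order-preserving map `i : G → ℝ` with `i 1 = 0` and a
group homomorphism `ρ : G →* (ℝ ≃o ℝ)` (order-automorphisms of `ℝ`) such that
`ρ g (i h) = i (g * h)` for all `g h`; in particular the orbit map `g ↦ ρ g 0`
equals `i`, is injective, and `ρ` is faithful. -/
theorem left_order_gives_allowed_action
    {G : Type*} [Group G] [Countable G] [LinearOrder G]
    [CovariantClass G G (· * ·) (· ≤ ·)] :
    ∃ (i : G → ℝ) (ρ : G →* (ℝ ≃o ℝ)),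
      i 1 = 0 ∧ StrictMono i ∧
      (∀ g h : G, ρ g (i h) = i (g * h)) ∧
      (∀ g : G, ρ g 0 = i g) ∧
      Function.Injective (fun g : G => ρ g (0 : ℝ)) ∧
      Function.Injective ρ := by
  classical
  -- strict left-covariance
  have key : ∀ (g x y : G), g * x < g * y ↔ x < y := by
    intro g x y
    constructor
    · intro h
      by_contra hc
      push_neg at hc
      exact absurd (mul_le_mul_right hc g) (not_le.mpr h)
    · intro h
      refine (mul_le_mul_right h.le g).lt_of_ne fun hEq => h.ne (mul_left_cancel hEq)
  -- the lexicographic order on `G ×ₗ ℚ` is countable dense without endpoints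
  haveI : Countable (G ×ₗ ℚ) := inferInstanceAs (Countable (G × ℚ))
  haveI : Nonempty (G ×ₗ ℚ) := ⟨toLex (1, 0)⟩
  haveI : DenselyOrdered (G ×ₗ ℚ) := by
    constructor
    intro a b hab
    rcases Prod.Lex.lt_iff.mp hab with h | ⟨h1, h2⟩
    · refine ⟨toLex ((ofLex a).1, (ofLex a).2 + 1), ?_, ?_⟩
      · exact Prod.Lex.lt_iff.mpr (Or.inr ⟨rfl, lt_add_one _⟩)
      · exact Prod.Lex.lt_iff.mpr (Or.inl h)
    · obtain ⟨q, hq1, hq2⟩ := exists_between h2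
      refine ⟨toLex ((ofLex a).1, q), ?_, ?_⟩
      · exact Prod.Lex.lt_iff.mpr (Or.inr ⟨rfl, hq1⟩)
      · exact Prod.Lex.lt_iff.mpr (Or.inr ⟨h1, hq2⟩)
  obtain ⟨φ₀⟩ : Nonempty ((G ×ₗ ℚ) ≃o ℚ) := Order.iso_of_countable_dense _ _
  -- normalize so that the identity goes to 0
  set φ : (G ×ₗ ℚ) ≃o ℚ := φ₀.trans (OrderIso.addRight (-(φ₀ (toLex (1, 0))))) with hφ
  have hφ1 : φ (toLex (1, 0)) = 0 := by
    show φ₀ (toLex (1, 0)) + -(φ₀ (toLex (1, 0))) = 0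
    exact add_neg_cancel _
  -- the action of `G` on `G ×ₗ ℚ`
  have keyEq : ∀ (g x y : G), g * x = g * y ↔ x = y := fun g x y => mul_right_inj g
  let A : G → (G ×ₗ ℚ) ≃o (G ×ₗ ℚ) := fun g =>
    { toFun := fun p => toLex (g * (ofLex p).1, (ofLex p).2)
      invFun := fun p => toLex (g⁻¹ * (ofLex p).1, (ofLex p).2)
      left_inv := fun p => by simp
      right_inv := fun p => by simp
      map_rel_iff' := by
        intro p q
        rw [← toLex_ofLex p, ← toLex_ofLex q]
        simp only [Equiv.coe_fn_mk, ofLex_toLex, Prod.Lex.le_iff]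
        rw [key, keyEq] }
  have hA : ∀ (g : G) (p : G ×ₗ ℚ),
      A g p = toLex (g * (ofLex p).1, (ofLex p).2) := fun _ _ => rfl
  -- conjugated action on ℚ
  let ρ' : G →* (ℚ ≃o ℚ) :=
    { toFun := fun g => φ.symm.trans ((A g).trans φ)
      map_one' := by
        apply OrderIso.ext
        funext q
        show φ (A 1 (φ.symm q)) = q
        rw [hA]
        simp
      map_mul' := by
        intro g g'
        apply OrderIso.ext
        funext q
        show φ (A (g * g') (φ.symm q)) =
          φ (A g (φ.symm (φ (A g' (φ.symm q)))))
        rw [φ.symm_apply_apply, hA, hA, hA]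
        simp [mul_assoc] }
  have hρ' : ∀ (g : G) (q : ℚ), ρ' g q = φ (A g (φ.symm q)) := fun _ _ => rfl
  refine ⟨fun g => ((φ (toLex (g, 0)) : ℚ) : ℝ), liftHom.comp ρ', ?_, ?_, ?_, ?_, ?_, ?_⟩
  · show ((φ (toLex ((1 : G), (0 : ℚ))) : ℚ) : ℝ) = 0
    rw [hφ1]; norm_num
  · intro g h hgh
    show ((φ (toLex (g, 0)) : ℚ) : ℝ) < ((φ (toLex (h, 0)) : ℚ) : ℝ)
    have : toLex ((g : G), (0 : ℚ)) < toLex (h, 0) :=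
      Prod.Lex.lt_iff.mpr (Or.inl hgh)
    exact_mod_cast φ.lt_iff_lt.mpr this
  · intro g h
    show liftIso (ρ' g) ((φ (toLex (h, 0)) : ℚ) : ℝ) = ((φ (toLex (g * h, 0)) : ℚ) : ℝ)
    rw [liftIso_apply, liftFun_rat, hρ', φ.symm_apply_apply, hA]
    simp
  · intro g
    show liftIso (ρ' g) (0 : ℝ) = ((φ (toLex (g, 0)) : ℚ) : ℝ)
    have h0 : ((φ (toLex ((1 : G), (0 : ℚ))) : ℚ) : ℝ) = 0 := by rw [hφ1]; norm_num
    rw [← h0, liftIso_apply, liftFun_rat, hρ', φ.symm_apply_apply, hA]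
    simp
  · intro g h hgh
    have hg : liftIso (ρ' g) (0 : ℝ) = liftIso (ρ' h) (0 : ℝ) := hgh
    have h0 : ((φ (toLex ((1 : G), (0 : ℚ))) : ℚ) : ℝ) = 0 := by rw [hφ1]; norm_num
    rw [← h0, liftIso_apply, liftFun_rat, liftIso_apply, liftFun_rat,
      hρ', hρ', φ.symm_apply_apply, hA, hA] at hg
    have h1 : φ (toLex (g * 1, (0 : ℚ))) = φ (toLex (h * 1, (0 : ℚ))) := by
      exact_mod_cast hg
    have h2 := φ.injective h1
    have h3 : g * 1 = h * 1 := congrArg (fun p => (ofLex p).1) h2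
    exact mul_right_cancel h3
  · intro g h hgh
    have hg : liftIso (ρ' g) (0 : ℝ) = liftIso (ρ' h) (0 : ℝ) := by
      show (liftHom.comp ρ') g 0 = (liftHom.comp ρ') h 0
      rw [hgh]
    have h0 : ((φ (toLex ((1 : G), (0 : ℚ))) : ℚ) : ℝ) = 0 := by rw [hφ1]; norm_num
    rw [← h0, liftIso_apply, liftFun_rat, liftIso_apply, liftFun_rat,
      hρ', hρ', φ.symm_apply_apply, hA, hA] at hg
    have h1 : φ (toLex (g * 1, (0 : ℚ))) = φ (toLex (h * 1, (0 : ℚ))) := by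
      exact_mod_cast hg
    have h2 := φ.injective h1
    have h3 : g * 1 = h * 1 := congrArg (fun p => (ofLex p).1) h2
    exact mul_right_cancel h3
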